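/- arXiv:2305.18438 — 2 statements merged into one kernel-verified Lean document; each statement's English description precedes it below -/
import Mathlib

section
/- Let φ₁,…,φₙ ∈ ℝᵈ with ‖φᵢ‖₂ ≤ 1, let y₁,…,yₙ ∈ ℝ with |yᵢ| ≤ H, and λ > 0. Define Λ = Σᵢ φᵢφᵢᵀ and ŵ = (Λ + λI)⁻¹ (Σᵢ φᵢ yᵢ). Then ‖ŵ‖₂ ≤ H·√(n·d/λ). -/
open Matrix Finset

lemma aux_vecMulVec_dot {d : ℕ} (v x : Fin d → ℝ) :
    x ⬝ᵥ (Matrix.vecMulVec v v).mulVec x = (v ⬝ᵥ x) ^ 2 := by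
  simp only [dotProduct, Matrix.mulVec, Matrix.vecMulVec_apply, sq,
    Finset.sum_mul, Finset.mul_sum]
  refine Finset.sum_congr rfl fun j _ => Finset.sum_congr rfl fun k _ => by ring

lemma aux_vecMulVec_posSemidef {d : ℕ} (v : Fin d → ℝ) :
    (Matrix.vecMulVec v v).PosSemidef := by
  rw [Matrix.posSemidef_iff_dotProduct_mulVec]
  constructor
  · ext i j
    simp [Matrix.vecMulVec_apply, Matrix.conjTranspose_apply, mul_comm]
  · intro x
    rw [star_trivial, aux_vecMulVec_dot]
    positivity

lemma aux_trace_vecMulVec_mul {d : ℕ} (v : Fin d → ℝ) (M : Matrix (Fin d) (Fin d) ℝ) :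
    Matrix.trace (Matrix.vecMulVec v v * M) = v ⬝ᵥ M.mulVec v := by
  simp only [Matrix.trace, Matrix.diag, Matrix.mul_apply, Matrix.vecMulVec_apply,
    dotProduct, Matrix.mulVec, Finset.mul_sum]
  rw [Finset.sum_comm]
  refine Finset.sum_congr rfl fun j _ => Finset.sum_congr rfl fun k _ => by ring

theorem stmt_8 {n d : ℕ} (φ : Fin n → (Fin d → ℝ)) (y : Fin n → ℝ) (H lam : ℝ)
    (hφ : ∀ i, Real.sqrt (∑ j, (φ i j) ^ 2) ≤ 1)
    (hy : ∀ i, |y i| ≤ H) (hlam : 0 < lam)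
    (Λ : Matrix (Fin d) (Fin d) ℝ) (hΛ : Λ = ∑ i, Matrix.vecMulVec (φ i) (φ i))
    (w : Fin d → ℝ)
    (hw : w = (Λ + lam • (1 : Matrix (Fin d) (Fin d) ℝ))⁻¹.mulVec (∑ i, y i • φ i)) :
    Real.sqrt (∑ j, (w j) ^ 2) ≤ H * Real.sqrt (n * d / lam) := by
  rcases Nat.eq_zero_or_pos n with hn | hn
  · subst hn
    simp only [Finset.univ_eq_empty, Finset.sum_empty, Matrix.mulVec_zero] at hw
    subst hw
    simp
  have hH : 0 ≤ H := le_trans (abs_nonneg _) (hy ⟨0, hn⟩)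
  set A := Λ + lam • (1 : Matrix (Fin d) (Fin d) ℝ) with hAdef
  have hΛps : Λ.PosSemidef := by
    rw [hΛ]
    refine Finset.sum_induction _ _ (fun a b ha hb => ha.add hb) Matrix.PosSemidef.zero
      (fun i _ => aux_vecMulVec_posSemidef (φ i))
  have hlam1 : (lam • (1 : Matrix (Fin d) (Fin d) ℝ)) =
      Matrix.diagonal (fun _ => lam) := by
    rw [Matrix.smul_one_eq_diagonal]
  have hApd : A.PosDef := by
    refine Matrix.PosDef.posSemidef_add hΛps ?_
    rw [hlam1]
    exact Matrix.PosDef.diagonal (fun _ => hlam)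
  have hAinv : A⁻¹.PosDef := hApd.inv
  have hdet : IsUnit A.det := isUnit_iff_ne_zero.mpr hApd.det_pos.ne'
  have hAAinv : A * A⁻¹ = 1 := Matrix.mul_nonsing_inv A hdet
  set u : Fin n → (Fin d → ℝ) := fun i => A⁻¹.mulVec (φ i) with hu
  have hwu : w = ∑ i, y i • u i := by
    rw [hw, ← Matrix.mulVecLin_apply, map_sum]
    exact Finset.sum_congr rfl fun i _ => by
      simp [Matrix.mulVecLin_apply, hu, Matrix.mulVec_smul]
  -- Euclidean norm
  set N : (Fin d → ℝ) → ℝ := fun v => ‖(EuclideanSpace.equiv (Fin d) ℝ).symm v‖ with hN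
  have hNeq : ∀ v : Fin d → ℝ, N v = Real.sqrt (∑ j, (v j) ^ 2) := by
    intro v
    show ‖(EuclideanSpace.equiv (Fin d) ℝ).symm v‖ = _
    rw [EuclideanSpace.norm_eq]
    congr 1
    refine Finset.sum_congr rfl fun j _ => ?_
    simp [Real.norm_eq_abs, sq_abs, EuclideanSpace.equiv]
  have hNnonneg : ∀ v, 0 ≤ N v := fun v => norm_nonneg _
  -- triangle inequality
  have step1 : N w ≤ ∑ i, H * N (u i) := by
    have hmap : (EuclideanSpace.equiv (Fin d) ℝ).symm w
        = ∑ i, y i • (EuclideanSpace.equiv (Fin d) ℝ).symm (u i) := by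
      rw [hwu]
      rw [map_sum]
      exact Finset.sum_congr rfl fun i _ => _root_.map_smul _ _ _
    calc N w = ‖∑ i, y i • (EuclideanSpace.equiv (Fin d) ℝ).symm (u i)‖ := by
          show ‖(EuclideanSpace.equiv (Fin d) ℝ).symm w‖ = _
          rw [hmap]
    _ ≤ ∑ i, ‖y i • (EuclideanSpace.equiv (Fin d) ℝ).symm (u i)‖ := norm_sum_le _ _
    _ ≤ ∑ i, H * N (u i) := by
        refine Finset.sum_le_sum fun i _ => ?_
        rw [norm_smul, Real.norm_eq_abs]
        exact mul_le_mul_of_nonneg_right (hy i) (norm_nonneg _)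
  -- pointwise bound: lam * ‖u i‖² ≤ φ i ⬝ u i
  have hpoint : ∀ i, lam * (∑ j, (u i j) ^ 2) ≤ φ i ⬝ᵥ u i := by
    intro i
    have hAu : A.mulVec (u i) = φ i := by
      rw [hu]
      rw [Matrix.mulVec_mulVec, hAAinv, Matrix.one_mulVec]
    have h1 : u i ⬝ᵥ A.mulVec (u i) = φ i ⬝ᵥ u i := by
      rw [hAu, dotProduct_comm]
    have h2 : u i ⬝ᵥ A.mulVec (u i)
        = u i ⬝ᵥ Λ.mulVec (u i) + lam * (∑ j, (u i j) ^ 2) := by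
      rw [hAdef, Matrix.add_mulVec, dotProduct_add]
      congr 1
      rw [Matrix.smul_mulVec, Matrix.one_mulVec, dotProduct_smul]
      simp [dotProduct, sq, Finset.mul_sum]
    have h3 : 0 ≤ u i ⬝ᵥ Λ.mulVec (u i) := by
      have := hΛps.dotProduct_mulVec_nonneg (u i)
      rwa [star_trivial] at this
    linarith [h1 ▸ h2]
  -- trace bound: ∑ i, φ i ⬝ u i ≤ d
  have htrace : (∑ i, φ i ⬝ᵥ u i) ≤ (d : ℝ) := by
    have heq : (∑ i, φ i ⬝ᵥ u i) = Matrix.trace (Λ * A⁻¹) := by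
      rw [hΛ, Finset.sum_mul, Matrix.trace_sum]
      exact (Finset.sum_congr rfl fun i _ => (aux_trace_vecMulVec_mul (φ i) A⁻¹).symm)
    have hΛA : Λ = A - lam • (1 : Matrix (Fin d) (Fin d) ℝ) := by
      rw [hAdef, add_sub_cancel_right]
    have heq2 : Matrix.trace (Λ * A⁻¹) = (d : ℝ) - lam * Matrix.trace A⁻¹ := by
      rw [hΛA, Matrix.sub_mul, hAAinv, Matrix.smul_mul, Matrix.one_mul,
        Matrix.trace_sub, Matrix.trace_one, Matrix.trace_smul]
      simp
    have htr : 0 ≤ Matrix.trace A⁻¹ := by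
      rw [Matrix.trace]
      refine Finset.sum_nonneg fun j _ => ?_
      have h := hAinv.posSemidef.dotProduct_mulVec_nonneg (Pi.single j 1)
      rw [star_trivial] at h
      have : Pi.single j 1 ⬝ᵥ A⁻¹.mulVec (Pi.single j 1) = A⁻¹ j j := by
        simp [dotProduct, Matrix.mulVec, Pi.single_apply]
      rwa [this] at h
    rw [heq, heq2]
    nlinarith
  -- sum of squared norms
  have hsq : (∑ i, (N (u i)) ^ 2) ≤ (d : ℝ) / lam := by
    have : ∀ i : Fin n, (N (u i)) ^ 2 = ∑ j, (u i j) ^ 2 := by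
      intro i
      rw [hNeq]
      exact Real.sq_sqrt (Finset.sum_nonneg fun j _ => sq_nonneg _)
    rw [Finset.sum_congr rfl fun i _ => this i]
    rw [div_eq_inv_mul, le_inv_mul_iff₀ hlam]
    calc lam * ∑ i, ∑ j, (u i j) ^ 2 = ∑ i, lam * ∑ j, (u i j) ^ 2 := Finset.mul_sum _ _ _
    _ ≤ ∑ i, φ i ⬝ᵥ u i := Finset.sum_le_sum fun i _ => hpoint i
    _ ≤ (d : ℝ) := htrace
  -- Cauchy–Schwarz on the sum of norms
  have hS : (∑ i, N (u i)) ≤ Real.sqrt (n * d / lam) := by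
    have hcs := sq_sum_le_card_mul_sum_sq (s := (Finset.univ : Finset (Fin n)))
      (f := fun i => N (u i))
    simp only [Finset.card_univ, Fintype.card_fin] at hcs
    have h1 : (∑ i, N (u i)) ^ 2 ≤ (n : ℝ) * ((d : ℝ) / lam) :=
      le_trans hcs (by
        exact mul_le_mul_of_nonneg_left hsq (by positivity))
    have h2 : (n : ℝ) * ((d : ℝ) / lam) = (n : ℝ) * d / lam := by ring
    rw [h2] at h1
    have h3 : (∑ i, N (u i)) = Real.sqrt ((∑ i, N (u i)) ^ 2) :=
      (Real.sqrt_sq (Finset.sum_nonneg fun i _ => hNnonneg _)).symm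
    rw [h3]
    exact Real.sqrt_le_sqrt h1
  calc Real.sqrt (∑ j, (w j) ^ 2) = N w := (hNeq w).symm
  _ ≤ ∑ i, H * N (u i) := step1
  _ = H * ∑ i, N (u i) := (Finset.mul_sum _ _ _).symm
  _ ≤ H * Real.sqrt (n * d / lam) := mul_le_mul_of_nonneg_left hS hH
end

section
/- Let Λ ⪰ 0 be a d×d positive semidefinite symmetric matrix, λ > 0, and suppose φ₁,…,φₙ ∈ ℝᵈ and ε₁,…,εₙ ∈ ℝ satisfy Σᵢ εᵢ² ≤ C. Then ‖Σᵢ εᵢφᵢ‖²_{(Λₙ+λI)⁻¹} ≤ C·d, where Λₙ = Σᵢ φᵢφᵢᵀ and ‖v‖²_M = vᵀMv. -/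
open Matrix

lemma quad_vecMulVec {d : ℕ} (u x : Fin d → ℝ) :
    x ⬝ᵥ (Matrix.vecMulVec u u).mulVec x = (u ⬝ᵥ x) ^ 2 := by
  simp [Matrix.vecMulVec_apply, Matrix.mulVec, dotProduct, Finset.mul_sum,
    Finset.sum_mul, sq]
  apply Finset.sum_congr rfl; intros; apply Finset.sum_congr rfl; intros; ring

lemma sum_dotProduct' {n d : ℕ} (f : Fin n → (Fin d → ℝ)) (w : Fin d → ℝ) :
    (∑ i, f i) ⬝ᵥ w = ∑ i, f i ⬝ᵥ w := by
  simp only [dotProduct, Finset.sum_apply, Finset.sum_mul]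
  exact Finset.sum_comm

lemma dotProduct_sum' {n d : ℕ} (w : Fin d → ℝ) (f : Fin n → (Fin d → ℝ)) :
    w ⬝ᵥ (∑ i, f i) = ∑ i, w ⬝ᵥ f i := by
  simp only [dotProduct, Finset.sum_apply, Finset.mul_sum]
  exact Finset.sum_comm

lemma sum_mulVec' {n d : ℕ} (M : Fin n → Matrix (Fin d) (Fin d) ℝ) (w : Fin d → ℝ) :
    (∑ i, M i).mulVec w = ∑ i, (M i).mulVec w := by
  ext x
  simp only [Matrix.mulVec, dotProduct, Matrix.sum_apply, Finset.sum_apply, Finset.sum_mul]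
  exact Finset.sum_comm

theorem stmt_18 {n d : ℕ} (lam C : ℝ) (hlam : 0 < lam) (hC : 0 ≤ C)
    (φ : Fin n → (Fin d → ℝ)) (ε : Fin n → ℝ) (hε : ∑ i, (ε i) ^ 2 ≤ C)
    (Λ : Matrix (Fin d) (Fin d) ℝ) (hΛ : Λ = ∑ i, Matrix.vecMulVec (φ i) (φ i)) :
    (∑ i, ε i • φ i) ⬝ᵥ
        ((Λ + lam • (1 : Matrix (Fin d) (Fin d) ℝ))⁻¹).mulVec (∑ i, ε i • φ i) ≤
      C * d := by
  rcases Nat.eq_zero_or_pos d with hd | hd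
  · subst hd
    simp [dotProduct]
  have hΛpsd : Λ.PosSemidef := by
    rw [hΛ]
    refine Finset.sum_induction _ (fun M : Matrix (Fin d) (Fin d) ℝ => M.PosSemidef)
      (fun a b ha hb => ha.add hb) Matrix.PosSemidef.zero (fun i _ => ?_)
    refine Matrix.posSemidef_iff_dotProduct_mulVec.mpr ⟨?_, ?_⟩
    · ext a b; simp [Matrix.vecMulVec_apply, mul_comm]
    · intro x
      simp only [star_trivial, quad_vecMulVec]
      positivity
  set A := Λ + lam • (1 : Matrix (Fin d) (Fin d) ℝ) with hAdef
  haveI : Nonempty (Fin d) := Fin.pos_iff_nonempty.mp hd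
  have hlam1 : (lam • (1 : Matrix (Fin d) (Fin d) ℝ)).PosDef := by
    rw [Matrix.smul_one_eq_diagonal]
    exact Matrix.posDef_diagonal_iff.mpr (fun _ => hlam)
  have hApd : A.PosDef := Matrix.PosDef.posSemidef_add hΛpsd hlam1
  set v : Fin d → ℝ := ∑ i, ε i • φ i with hv
  set w : Fin d → ℝ := (A⁻¹).mulVec v with hw
  set S : ℝ := v ⬝ᵥ w with hS
  have hS0 : 0 ≤ S := by
    have := (Matrix.posSemidef_iff_dotProduct_mulVec.mp hApd.inv.posSemidef).2 v
    simpa [hS, hw] using this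
  have hSsum : S = ∑ i, ε i * (φ i ⬝ᵥ w) := by
    rw [hS, hv, sum_dotProduct']
    exact Finset.sum_congr rfl fun i _ => by rw [smul_dotProduct, smul_eq_mul]
  have hCS : S ^ 2 ≤ (∑ i, (ε i) ^ 2) * (∑ i, (φ i ⬝ᵥ w) ^ 2) := by
    rw [hSsum]
    exact Finset.sum_mul_sq_le_sq_mul_sq Finset.univ ε (fun i => φ i ⬝ᵥ w)
  have hT : ∑ i, (φ i ⬝ᵥ w) ^ 2 = w ⬝ᵥ Λ.mulVec w := by
    rw [hΛ, sum_mulVec', dotProduct_sum']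
    exact Finset.sum_congr rfl fun i _ => (quad_vecMulVec (φ i) w).symm
  have hdet : IsUnit A.det := isUnit_iff_ne_zero.mpr hApd.det_pos.ne'
  have hAw : w ⬝ᵥ A.mulVec w = S := by
    rw [hw, Matrix.mulVec_mulVec, Matrix.mul_nonsing_inv A hdet, Matrix.one_mulVec,
      hS, hv, dotProduct_comm]
  have hww : 0 ≤ w ⬝ᵥ w := by
    exact Finset.sum_nonneg fun i _ => mul_self_nonneg _
  have hTle : w ⬝ᵥ Λ.mulVec w ≤ S := by
    rw [← hAw, hAdef, Matrix.add_mulVec, dotProduct_add]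
    have h2 : 0 ≤ w ⬝ᵥ (lam • (1 : Matrix (Fin d) (Fin d) ℝ)).mulVec w := by
      rw [Matrix.smul_mulVec, Matrix.one_mulVec, dotProduct_smul, smul_eq_mul]
      positivity
    linarith
  have hTnn : 0 ≤ ∑ i, (φ i ⬝ᵥ w) ^ 2 := Finset.sum_nonneg fun i _ => sq_nonneg _
  have hSC : S ^ 2 ≤ C * S := by
    calc S ^ 2 ≤ (∑ i, (ε i) ^ 2) * (∑ i, (φ i ⬝ᵥ w) ^ 2) := hCS
    _ ≤ C * S := by
        refine mul_le_mul hε ?_ hTnn hC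
        rw [hT]; exact hTle
  have hd1 : (1 : ℝ) ≤ d := by exact_mod_cast hd
  have hSleC : S ≤ C := by
    rcases eq_or_lt_of_le hS0 with h | h
    · rw [← h]; exact hC
    · refine le_of_mul_le_mul_right ?_ h
      calc S * S = S ^ 2 := (sq S).symm
      _ ≤ C * S := hSC
  calc S ≤ C := hSleC
  _ ≤ C * d := le_mul_of_one_le_right hC hd1
end
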